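/- arXiv:1903.10379 — 2 statements merged into one kernel-verified Lean document; each statement's English description precedes it below -/
import Mathlib

section
/- Let T be a hyperplane in ℝⁿ (an (n-1)-dimensional linear subspace), α ∈ T, and f : T → T^⊥ a function continuous at α. Set a = α + f(α) and A = {χ + f(χ) : χ ∈ T}. If the tangent cone Tan(A, a) is contained in T, then f is differentiable at α with Df(α) = 0. -/
open scoped RealInnerProductSpace
open Filter Asymptotics Topology Metric

/-- Tangent cone of a set `A` at a point `a`. -/
def tanCone {n : ℕ} (A : Set (EuclideanSpace ℝ (Fin n))) (a : EuclideanSpace ℝ (Fin n)) :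
    Set (EuclideanSpace ℝ (Fin n)) :=
  {v | ∀ ε > (0 : ℝ), ∃ x ∈ A, ∃ r : ℝ, 0 < r ∧ ‖x - a‖ < ε ∧ ‖r • (x - a) - v‖ < ε}


private lemma aux_ratio {c p q d : ℝ} (hc : 0 < c) (hp : 0 ≤ p) (hq : 0 < q) (hd : 0 < d)
    (hsq : d ^ 2 = p ^ 2 + q ^ 2) (hcp : c * p < q) :
    c / Real.sqrt (1 + c ^ 2) ≤ q / d := by
  have hs : 0 < Real.sqrt (1 + c ^ 2) := Real.sqrt_pos.mpr (by positivity)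
  have hdle : d ≤ q * Real.sqrt (1 + c ^ 2) / c := by
    have h2 : (q * Real.sqrt (1 + c ^ 2) / c) ^ 2 = q ^ 2 * (1 + c ^ 2) / c ^ 2 := by
      rw [div_pow, mul_pow, Real.sq_sqrt (by positivity : (0:ℝ) ≤ 1 + c ^ 2)]
    have h4 : 0 ≤ q * Real.sqrt (1 + c ^ 2) / c := by positivity
    have hdb : d ^ 2 ≤ q ^ 2 * (1 + c ^ 2) / c ^ 2 := by
      rw [hsq, le_div_iff₀ (by positivity : (0:ℝ) < c ^ 2)]
      nlinarith [mul_nonneg hc.le hp, sq_nonneg q]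
    have h5 : d ^ 2 ≤ (q * Real.sqrt (1 + c ^ 2) / c) ^ 2 := by rw [h2]; exact hdb
    nlinarith [hd, h4, sq_nonneg (d - q * Real.sqrt (1 + c ^ 2) / c)]
  rw [div_le_div_iff₀ hs hd]
  calc c * d ≤ c * (q * Real.sqrt (1 + c ^ 2) / c) := mul_le_mul_of_nonneg_left hdle hc.le
    _ = q * Real.sqrt (1 + c ^ 2) := by field_simp

theorem stmt_0 {n : ℕ} (T : Submodule ℝ (EuclideanSpace ℝ (Fin n)))
    (hT : Module.finrank ℝ T = n - 1)
    (f : T → Tᗮ) (α : T) (hf : ContinuousAt f α)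
    (a : EuclideanSpace ℝ (Fin n)) (ha : a = (α : EuclideanSpace ℝ (Fin n)) + (f α : EuclideanSpace ℝ (Fin n)))
    (A : Set (EuclideanSpace ℝ (Fin n)))
    (hA : A = {x | ∃ χ : T, x = (χ : EuclideanSpace ℝ (Fin n)) + (f χ : EuclideanSpace ℝ (Fin n))})
    (htan : tanCone A a ⊆ (T : Set (EuclideanSpace ℝ (Fin n)))) :
    HasFDerivAt f (0 : T →L[ℝ] Tᗮ) α := by
  classical
  rw [hasFDerivAt_iff_isLittleO_nhds_zero, isLittleO_iff]
  intro c hc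
  by_contra hev
  rw [Filter.not_eventually] at hev
  simp only [ContinuousLinearMap.zero_apply, sub_zero, not_le] at hev
  -- extract a sequence
  have hseq : ∀ k : ℕ, ∃ h : T, ‖h‖ < 1 / (k + 1) ∧ c * ‖h‖ < ‖f (α + h) - f α‖ := by
    intro k
    rcases Filter.frequently_iff.mp hev (Metric.ball_mem_nhds 0 (by positivity : (0:ℝ) < 1/(k+1)))
      with ⟨h, hball, hgt⟩
    exact ⟨h, by simpa [Metric.mem_ball, dist_eq_norm] using hball, hgt⟩
  choose hs hsmall hgt using hseq
  -- components
  set p : ℕ → EuclideanSpace ℝ (Fin n) := fun k => ((hs k : EuclideanSpace ℝ (Fin n))) with hp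
  set q : ℕ → EuclideanSpace ℝ (Fin n) := fun k => ((f (α + hs k) : EuclideanSpace ℝ (Fin n)) - (f α : EuclideanSpace ℝ (Fin n))) with hq
  have hqT : ∀ k, q k ∈ Tᗮ := fun k => sub_mem (f (α + hs k)).2 (f α).2
  have hpT : ∀ k, p k ∈ T := fun k => (hs k).2
  have hqnorm : ∀ k, ‖f (α + hs k) - f α‖ = ‖q k‖ := by
    intro k; rw [Submodule.coe_norm]; rfl
  have hpnorm : ∀ k, ‖hs k‖ = ‖p k‖ := by
    intro k; rw [Submodule.coe_norm]
  have hqpos : ∀ k, 0 < ‖q k‖ := by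
    intro k
    have h := hgt k
    rw [hqnorm k, hpnorm k] at h
    exact lt_of_le_of_lt (mul_nonneg hc.le (norm_nonneg _)) h
  -- the points on A
  set x : ℕ → EuclideanSpace ℝ (Fin n) := fun k => ((α + hs k : T) : EuclideanSpace ℝ (Fin n)) + ((f (α + hs k) : EuclideanSpace ℝ (Fin n))) with hx
  have hxA : ∀ k, x k ∈ A := by
    intro k
    rw [hA]
    exact ⟨α + hs k, rfl⟩
  have hxa : ∀ k, x k - a = p k + q k := by
    intro k
    simp only [hx, ha, hp, hq, Submodule.coe_add]
    abel
  have hinner : ∀ k, ⟪p k, q k⟫ = (0 : ℝ) :=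
    fun k => Submodule.inner_right_of_mem_orthogonal (hpT k) (hqT k)
  set d : ℕ → ℝ := fun k => ‖x k - a‖ with hd
  have hdsq : ∀ k, d k ^ 2 = ‖p k‖ ^ 2 + ‖q k‖ ^ 2 := by
    intro k
    show ‖x k - a‖ ^ 2 = _
    rw [hxa k, norm_add_sq_real, hinner k]; ring
  have hdq : ∀ k, ‖q k‖ ≤ d k := by
    intro k
    have h1 : ‖q k‖ ^ 2 ≤ d k ^ 2 := by nlinarith [hdsq k, sq_nonneg (‖p k‖)]
    nlinarith [norm_nonneg (q k), norm_nonneg (x k - a), hd]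
  have hdpos : ∀ k, 0 < d k := fun k => lt_of_lt_of_le (hqpos k) (hdq k)
  -- lower bound for q component of unit vector
  set δ : ℝ := c / Real.sqrt (1 + c ^ 2) with hδ
  have hδpos : 0 < δ := div_pos hc (Real.sqrt_pos.mpr (by positivity))
  have hratio : ∀ k, δ ≤ ‖q k‖ / d k := by
    intro k
    have hcp : c * ‖p k‖ < ‖q k‖ := by
      have := hgt k; rwa [hqnorm k, hpnorm k] at this
    exact aux_ratio hc (norm_nonneg (p k)) (hqpos k) (hdpos k) (hdsq k) hcp
  -- unit vectors
  set u : ℕ → EuclideanSpace ℝ (Fin n) := fun k => (d k)⁻¹ • (x k - a) with hu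
  have hunorm : ∀ k, u k ∈ Metric.sphere (0 : EuclideanSpace ℝ (Fin n)) 1 := by
    intro k
    simp only [hu, Metric.mem_sphere, dist_zero_right, norm_smul, norm_inv, Real.norm_eq_abs,
      abs_of_pos (hdpos k)]
    exact inv_mul_cancel₀ (hdpos k).ne'
  obtain ⟨v, hvs, φ, hφ, hconv⟩ := (isCompact_sphere (0 : EuclideanSpace ℝ (Fin n)) 1).tendsto_subseq hunorm
  -- x k → a
  have hhs0 : Filter.Tendsto hs atTop (𝓝 0) := by
    rw [tendsto_zero_iff_norm_tendsto_zero]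
    apply squeeze_zero (fun k => norm_nonneg _) (fun k => (hsmall k).le)
    exact tendsto_one_div_add_atTop_nhds_zero_nat
  have hχ : Filter.Tendsto (fun k => α + hs k) atTop (𝓝 α) := by
    have := tendsto_const_nhds.add hhs0 (f := fun k : ℕ => α)
    simpa using this
  have hfχ : Filter.Tendsto (fun k => f (α + hs k)) atTop (𝓝 (f α)) := hf.tendsto.comp hχ
  have hxta : Filter.Tendsto x atTop (𝓝 a) := by
    rw [ha]
    have h1 : Filter.Tendsto (fun k => ((α + hs k : T) : EuclideanSpace ℝ (Fin n))) atTop (𝓝 (α : EuclideanSpace ℝ (Fin n))) :=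
      (continuous_subtype_val.tendsto α).comp hχ
    have h2 : Filter.Tendsto (fun k => ((f (α + hs k) : EuclideanSpace ℝ (Fin n)))) atTop (𝓝 (f α : EuclideanSpace ℝ (Fin n))) :=
      (continuous_subtype_val.tendsto (f α)).comp hfχ
    exact h1.add h2
  have hdta : Filter.Tendsto d atTop (𝓝 0) := by
    have := (hxta.sub_const a).norm
    simpa using this
  -- v is in the tangent cone
  have hvtan : v ∈ tanCone A a := by
    intro ε hε
    have h1 : ∀ᶠ k in atTop, d (φ k) < ε :=
      (hdta.comp hφ.tendsto_atTop).eventually (eventually_lt_nhds hε)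
    have h2 : ∀ᶠ k in atTop, ‖u (φ k) - v‖ < ε := by
      have := hconv
      rw [tendsto_iff_norm_sub_tendsto_zero] at this
      exact this.eventually (gt_mem_nhds hε)
    obtain ⟨k, hk1, hk2⟩ := (h1.and h2).exists
    exact ⟨x (φ k), hxA _, (d (φ k))⁻¹, inv_pos.mpr (hdpos _), hk1, hk2⟩
  have hvT : v ∈ T := htan hvtan
  -- projection argument
  set P : EuclideanSpace ℝ (Fin n) →L[ℝ] Tᗮ := Submodule.orthogonalProjectionOnto Tᗮ with hP
  have hPu : ∀ k, ‖P (u k)‖ = ‖q k‖ / d k := by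
    intro k
    have : P (u k) = (d k)⁻¹ • (⟨q k, hqT k⟩ : Tᗮ) := by
      rw [hP, hu]
      simp only [map_smul, hxa k, map_add]
      rw [Submodule.orthogonalProjectionOnto_apply_of_mem_orthogonal
        (Submodule.le_orthogonal_orthogonal T (hpT k))]
      have hq' : (Submodule.orthogonalProjectionOnto Tᗮ) (q k) = ⟨q k, hqT k⟩ :=
        Submodule.orthogonalProjectionOnto_mem_subspace_eq_self ⟨q k, hqT k⟩
      rw [hq', zero_add]
    rw [this, norm_smul, norm_inv, Real.norm_eq_abs, abs_of_pos (hdpos k), Submodule.coe_norm]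
    exact (div_eq_inv_mul _ _).symm
  have hPv : (P v : EuclideanSpace ℝ (Fin n)) = 0 := by
    rw [hP]
    rw [Submodule.orthogonalProjectionOnto_apply_of_mem_orthogonal
      (Submodule.le_orthogonal_orthogonal T hvT)]
    rfl
  have hPconv : Filter.Tendsto (fun k => ‖P (u (φ k))‖) atTop (𝓝 ‖P v‖) :=
    ((P.continuous.tendsto v).comp hconv).norm
  have hPvnorm : ‖P v‖ = 0 := by
    rw [Submodule.coe_norm, hPv, norm_zero]
  have : δ ≤ ‖P v‖ := by
    apply ge_of_tendsto hPconv
    filter_upwards with k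
    rw [hPu]
    exact hratio _
  rw [hPvnorm] at this
  exact absurd this (not_le.mpr hδpos)
end

section
/- Let Σ = T ∩ S^{n-1} where T ∈ G(n, m+1) is an (m+1)-dimensional linear subspace of ℝⁿ and S^{n-1} the unit sphere. Then for every a ∈ Σ, the set {η ∈ ℝⁿ : η • (w - a) ≥ 0 for every w ∈ Σ} equals {η ∈ T^⊥ ⊕ span(a) : η • (-a) ≥ 0}; that is, it equals D(Tan(Σ,a), -a) := Tan(Σ,a)^⊥ ∩ {u : u • (-a) ≥ 0}, where Tan(Σ,a) = {v ∈ T : v • a = 0}. -/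
open scoped RealInnerProductSpace

theorem stmt_10 {n m : ℕ} (T : Submodule ℝ (EuclideanSpace ℝ (Fin n)))
    (hT : Module.finrank ℝ T = m + 1)
    (Sig : Set (EuclideanSpace ℝ (Fin n)))
    (hSig : Sig = (T : Set (EuclideanSpace ℝ (Fin n))) ∩ Metric.sphere 0 1)
    (a : EuclideanSpace ℝ (Fin n)) (ha : a ∈ Sig)
    (Tan : Submodule ℝ (EuclideanSpace ℝ (Fin n)))
    (hTan : Tan = T ⊓ (Submodule.span ℝ {a})ᗮ) :
    {η : EuclideanSpace ℝ (Fin n) | ∀ w ∈ Sig, 0 ≤ ⟪η, w - a⟫} =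
      (Tanᗮ : Set (EuclideanSpace ℝ (Fin n))) ∩ {u | 0 ≤ ⟪u, -a⟫} := by
  subst hSig hTan
  obtain ⟨haT, haS⟩ := ha
  replace haS : ‖a‖ = 1 := mem_sphere_zero_iff_norm.mp haS
  have haa : ⟪a, a⟫ = 1 := by
    rw [real_inner_self_eq_norm_sq, haS]; norm_num
  ext η
  simp only [Set.mem_setOf_eq, Set.mem_inter_iff, SetLike.mem_coe]
  constructor
  · intro h
    have hηa : ⟪η, a⟫ ≤ 0 := by
      have hm : (-a) ∈ (T : Set _) ∩ Metric.sphere 0 1 :=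
        ⟨T.neg_mem haT, by simp [mem_sphere_zero_iff_norm, haS]⟩
      have h1 := h (-a) hm
      have h2 : ⟪η, -a - a⟫ = -2 * ⟪η, a⟫ := by
        rw [inner_sub_right, inner_neg_right]; ring
      rw [h2] at h1
      linarith
    refine ⟨?_, by rw [inner_neg_right]; linarith⟩
    rw [Submodule.mem_orthogonal]
    intro v hv
    rw [Submodule.mem_inf, Submodule.mem_orthogonal_singleton_iff_inner_right] at hv
    obtain ⟨hvT, hva⟩ := hv
    rcases eq_or_ne v 0 with rfl | hv0
    · simp
    set u := ‖v‖⁻¹ • v with hu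
    have hnv : ‖v‖ ≠ 0 := norm_ne_zero_iff.mpr hv0
    have hnu : ‖u‖ = 1 := by
      rw [hu, norm_smul]; simp; field_simp
    have huT : u ∈ T := T.smul_mem _ hvT
    have hau : ⟪a, u⟫ = 0 := by rw [hu, real_inner_smul_right, hva, mul_zero]
    have huu : ⟪u, u⟫ = 1 := by rw [real_inner_self_eq_norm_sq, hnu]; norm_num
    have key : ∀ s : ℝ, 0 ≤ -(s^2) * ⟪η, a⟫ + s * ⟪η, u⟫ := by
      intro s
      have hs : (0:ℝ) < 1 + s^2 := by positivity
      set c : ℝ := (1 - s^2) / (1 + s^2) with hc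
      set d : ℝ := 2*s / (1 + s^2) with hd
      have hw : (c • a + d • u) ∈ (T : Set _) ∩ Metric.sphere 0 1 := by
        refine ⟨T.add_mem (T.smul_mem _ haT) (T.smul_mem _ huT),
          mem_sphere_zero_iff_norm.mpr ?_⟩
        have hn2 : ‖c • a + d • u‖^2 = 1 := by
          rw [← real_inner_self_eq_norm_sq, real_inner_add_add_self]
          simp only [real_inner_smul_left, real_inner_smul_right, haa, hau, huu]
          rw [hc, hd]
          field_simp
          ring
        nlinarith [norm_nonneg (c • a + d • u)]
      have h3 := h _ hw
      have h4 : ⟪η, c • a + d • u - a⟫ =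
          (-(2*s^2) * ⟪η, a⟫ + 2*s * ⟪η, u⟫) / (1 + s^2) := by
        rw [inner_sub_right, inner_add_right, real_inner_smul_right,
          real_inner_smul_right, hc, hd]
        field_simp
        ring
      rw [h4] at h3
      have h5 := (le_div_iff₀ hs).mp h3
      linarith
    have hβ : ⟪η, u⟫ = 0 := by
      set α : ℝ := ⟪η, a⟫ with hα
      set β : ℝ := ⟪η, u⟫ with hβ'
      have hd : α - 1 ≠ 0 := by linarith
      have hk := key (β / (α - 1))
      have he : -((β / (α - 1))^2) * α + (β / (α - 1)) * β =
          -(β^2) / (α - 1)^2 := by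
        field_simp
        ring
      rw [he] at hk
      have hle : -(β^2) / (α - 1)^2 ≤ 0 := by
        apply div_nonpos_of_nonpos_of_nonneg
        · nlinarith [sq_nonneg β]
        · positivity
      have hz : -(β^2) / (α - 1)^2 = 0 := le_antisymm hle hk
      field_simp at hz
      simpa using hz
    rw [hu, real_inner_smul_right] at hβ
    rw [real_inner_comm]
    rcases mul_eq_zero.mp hβ with h' | h'
    · exact absurd h' (inv_ne_zero hnv)
    · exact h'
  · rintro ⟨hηT, hηa⟩ w ⟨hwT, hwS⟩
    replace hwS : ‖w‖ = 1 := mem_sphere_zero_iff_norm.mp hwS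
    have hv : w - ⟪a, w⟫ • a ∈ T ⊓ (Submodule.span ℝ {a})ᗮ := by
      refine Submodule.mem_inf.mpr ⟨T.sub_mem hwT (T.smul_mem _ haT), ?_⟩
      rw [Submodule.mem_orthogonal_singleton_iff_inner_right]
      rw [inner_sub_right, real_inner_smul_right, haa]; ring
    have h0 : ⟪w - ⟪a, w⟫ • a, η⟫ = 0 :=
      (Submodule.mem_orthogonal _ η).mp hηT _ hv
    have hdecomp : w - a = (w - ⟪a, w⟫ • a) + (⟪a, w⟫ - 1) • a := by module
    have h0' : ⟪η, w - ⟪a, w⟫ • a⟫ = 0 := by rw [real_inner_comm]; exact h0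
    rw [hdecomp, inner_add_right, real_inner_smul_right, h0']
    have hle : ⟪a, w⟫ ≤ 1 := by
      have := real_inner_le_norm a w
      rw [haS, hwS] at this; linarith
    rw [inner_neg_right] at hηa
    have h7 : 0 ≤ (1 - ⟪a, w⟫) * (-⟪η, a⟫) :=
      mul_nonneg (by linarith) (by linarith)
    nlinarith [h7]
end
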